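/- Let n ≥ 1 and λ > 0, let E_λ ⊂ L²(𝕋ⁿ) be the (finite-dimensional) span of the exponentials {e^{i k·x} : k ∈ ℤⁿ, ‖k‖ = λ}, and let (ψ_j)_{j∈J} be an orthonormal basis of E_λ. Then for every a ∈ L²(𝕋ⁿ), writing â_p = (2π)^{-n} ∫_{𝕋ⁿ} a(x) e^{-i p·x} dx for its Fourier coefficients, one has Σ_{j∈J} |∫_{𝕋ⁿ} a(x)|ψ_j(x)|² dx − â_0|² ≤ (2π)ⁿ Σ_{p∈ℤⁿ, p≠0} |â_p|² · #{k ∈ ℤⁿ : ‖k‖ = λ and ‖k + p‖ = λ}. -/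

import Mathlib

open MeasureTheory Filter Topology

/-- Euclidean inner product on `Fin n → ℝ`. -/
noncomputable def dotp {n : ℕ} (v w : Fin n → ℝ) : ℝ := ∑ i, v i * w i

/-- Euclidean norm on `Fin n → ℝ`. -/
noncomputable def euclNorm {n : ℕ} (v : Fin n → ℝ) : ℝ := Real.sqrt (∑ i, (v i)^2)

/-- The fundamental domain `[0, 2π]ⁿ` of the flat torus `ℝⁿ/(2πℤ)ⁿ`. -/
noncomputable def torusBox (n : ℕ) : Set (Fin n → ℝ) :=
  Set.univ.pi fun _ => Set.Icc 0 (2*Real.pi)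

/-- The trigonometric polynomial `x ↦ ∑_{k ∈ F} c_k e^{i k·x}`. -/
noncomputable def eigenSum {n : ℕ} (F : Finset (Fin n → ℤ)) (c : (Fin n → ℤ) → ℂ)
    (x : Fin n → ℝ) : ℂ :=
  ∑ k ∈ F, c k * Complex.exp (Complex.I * (dotp (fun i => (k i : ℝ)) x : ℝ))

/-- The `p`-th Fourier coefficient `â_p = (2π)^{-n} ∫_{𝕋ⁿ} a(x) e^{-i p·x} dx`. -/
noncomputable def fourierCoeff' {n : ℕ} (a : (Fin n → ℝ) → ℂ) (p : Fin n → ℤ) : ℂ :=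
  (((2*Real.pi)^n : ℝ) : ℂ)⁻¹ *
    ∫ x in torusBox n, a x * Complex.exp (-Complex.I * (dotp (fun i => (p i : ℝ)) x : ℝ))

/-! ### Auxiliary material -/

open scoped Matrix

/-- Type synonym of `ℝ` carrying the restricted measure on `[0,2π]`. -/
def R2pi : Type := ℝ

noncomputable instance : MeasureSpace R2pi :=
  { toMeasurableSpace := inferInstanceAs (MeasurableSpace ℝ),
    volume := (volume : Measure ℝ).restrict (Set.Icc 0 (2*Real.pi)) }

instance : IsFiniteMeasure (volume : Measure R2pi) :=
  inferInstanceAs (IsFiniteMeasure ((volume : Measure ℝ).restrict (Set.Icc 0 (2*Real.pi))))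

instance : SigmaFinite (volume : Measure R2pi) := by infer_instance

lemma restrict_box_eq (n : ℕ) :
    (volume : Measure (Fin n → ℝ)).restrict (torusBox n)
      = Measure.pi (fun _ : Fin n => (volume : Measure ℝ).restrict (Set.Icc 0 (2*Real.pi))) := by
  refine (Measure.pi_eq fun s hs => ?_).symm
  rw [Measure.restrict_apply (MeasurableSet.univ_pi hs), torusBox, ← Set.pi_inter_distrib,
    volume_pi, Measure.pi_pi]
  exact Finset.prod_congr rfl fun i _ => (Measure.restrict_apply (hs i)).symm

lemma box_prod_integral (n : ℕ) (f : Fin n → ℝ → ℂ) :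
    ∫ x in torusBox n, ∏ i, f i (x i)
      = ∏ i, ∫ t in Set.Icc 0 (2*Real.pi), f i t := by
  rw [restrict_box_eq]
  exact MeasureTheory.integral_fintype_prod_eq_prod (E := fun _ => R2pi) f
    (μ := fun _ => (volume : Measure R2pi))

noncomputable def charE {n : ℕ} (m : Fin n → ℤ) (x : Fin n → ℝ) : ℂ :=
  Complex.exp (Complex.I * (dotp (fun i => (m i : ℝ)) x : ℝ))

lemma oneDim_integral (m : ℤ) :
    (∫ t in Set.Icc (0:ℝ) (2*Real.pi), Complex.exp (Complex.I * (((m:ℝ) * t : ℝ) : ℂ)))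
      = if m = 0 then ((2*Real.pi : ℝ) : ℂ) else 0 := by
  by_cases hm : m = 0
  · simp [hm, Real.volume_Icc, ENNReal.toReal_ofReal (by positivity : (0:ℝ) ≤ 2*Real.pi),
      max_eq_left (by positivity : (0:ℝ) ≤ 2*Real.pi)]
  · rw [if_neg hm]
    have h0 : (0:ℝ) ≤ 2*Real.pi := by positivity
    have hconv : ∀ t : ℝ, Complex.exp (Complex.I * (((m:ℝ) * t : ℝ) : ℂ))
        = Complex.exp ((Complex.I * (m:ℂ)) * (t:ℂ)) := by
      intro t; push_cast; ring_nf
    simp_rw [hconv]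
    rw [MeasureTheory.integral_Icc_eq_integral_Ioc,
      ← intervalIntegral.integral_of_le h0,
      integral_exp_mul_complex (mul_ne_zero Complex.I_ne_zero (Int.cast_ne_zero.2 hm))]
    have : Complex.I * (m:ℂ) * ((2*Real.pi : ℝ):ℂ) = (m:ℂ) * (2 * (Real.pi:ℂ) * Complex.I) := by
      push_cast; ring
    rw [this, Complex.exp_int_mul_two_pi_mul_I]
    simp

lemma charE_int {n : ℕ} (m : Fin n → ℤ) :
    (∫ x in torusBox n, charE m x)
      = if m = 0 then (((2*Real.pi)^n : ℝ) : ℂ) else 0 := by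
  have hsplit : ∀ x : Fin n → ℝ, charE m x
      = ∏ i, Complex.exp (Complex.I * (((m i : ℝ) * x i : ℝ) : ℂ)) := by
    intro x
    rw [charE, ← Complex.exp_sum]
    congr 1
    rw [dotp]
    push_cast [Finset.mul_sum]
    rfl
  simp_rw [hsplit]
  rw [box_prod_integral n (fun i t => Complex.exp (Complex.I * (((m i : ℝ) * t : ℝ) : ℂ)))]
  simp_rw [oneDim_integral]
  by_cases hm : m = 0
  · simp [hm, funext_iff]
  · obtain ⟨i, hi⟩ : ∃ i, m i ≠ 0 := by
      by_contra h; push_neg at h; exact hm (funext h)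
    rw [if_neg hm]
    exact Finset.prod_eq_zero (Finset.mem_univ i) (by simp [hi])

lemma charE_mul_conj {n : ℕ} (k k' : Fin n → ℤ) (x : Fin n → ℝ) :
    charE k x * (starRingEnd ℂ) (charE k' x) = charE (k - k') x := by
  rw [charE, charE, charE, ← Complex.exp_conj, ← Complex.exp_add]
  congr 1
  have : dotp (fun i => ((k - k') i : ℝ)) x
      = dotp (fun i => (k i : ℝ)) x - dotp (fun i => (k' i : ℝ)) x := by
    simp only [dotp, Pi.sub_apply]
    push_cast
    rw [← Finset.sum_sub_distrib]
    congr 1; ext i; ring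
  rw [this]
  simp only [map_mul, Complex.conj_I, Complex.conj_ofReal]
  push_cast
  ring

lemma charE_cont {n : ℕ} (m : Fin n → ℤ) : Continuous (charE m) := by
  apply Complex.continuous_exp.comp
  apply continuous_const.mul
  apply Complex.continuous_ofReal.comp
  exact continuous_finset_sum _ fun i _ => continuous_const.mul (continuous_apply i)

lemma charE_norm {n : ℕ} (m : Fin n → ℤ) (x : Fin n → ℝ) : ‖charE m x‖ = 1 := by
  simp [charE, Complex.norm_exp]

lemma eigenSum_eq {n : ℕ} (F : Finset (Fin n → ℤ)) (c : (Fin n → ℤ) → ℂ) (x : Fin n → ℝ) :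
    eigenSum F c x = ∑ k ∈ F, c k * charE k x := rfl

instance isFinite_box (n : ℕ) : IsFiniteMeasure (volume.restrict (torusBox n)) :=
  ⟨by rw [Measure.restrict_apply_univ]
      exact (isCompact_univ_pi fun _ => isCompact_Icc).measure_lt_top⟩

lemma integrable_a_charE {n : ℕ} {a : (Fin n → ℝ) → ℂ}
    (ha : Integrable a (volume.restrict (torusBox n))) (m : Fin n → ℤ) :
    Integrable (fun x => a x * charE m x) (volume.restrict (torusBox n)) := by
  simpa [mul_comm] using
    ha.bdd_mul (charE_cont m).aestronglyMeasurable (c := 1) (Eventually.of_forall fun x => le_of_eq (charE_norm m x))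

lemma twopin_pos (n : ℕ) : (0:ℝ) < (2*Real.pi)^n := by positivity

lemma integral_a_charE {n : ℕ} (a : (Fin n → ℝ) → ℂ) (m : Fin n → ℤ) :
    (∫ x in torusBox n, a x * charE m x)
      = (((2*Real.pi)^n : ℝ) : ℂ) * fourierCoeff' a (-m) := by
  have hpt : ∀ x : Fin n → ℝ,
      a x * Complex.exp (-Complex.I * (dotp (fun i => ((-m) i : ℝ)) x : ℝ))
        = a x * charE m x := by
    intro x
    congr 1
    rw [charE]
    congr 1
    have : dotp (fun i => ((-m) i : ℝ)) x = -dotp (fun i => (m i : ℝ)) x := by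
      simp [dotp, ← Finset.sum_neg_distrib]
    rw [this]
    push_cast
    ring
  rw [fourierCoeff']
  simp_rw [hpt]
  rw [← mul_assoc, ← Complex.ofReal_inv, ← Complex.ofReal_mul,
    mul_inv_cancel₀ (twopin_pos n).ne']
  simp

lemma expand_pair {n : ℕ} (F : Finset (Fin n → ℤ)) (c c' : (Fin n → ℤ) → ℂ)
    (a : (Fin n → ℝ) → ℂ) (x : Fin n → ℝ) :
    a x * (eigenSum F c x * (starRingEnd ℂ) (eigenSum F c' x))
      = ∑ q ∈ F ×ˢ F, (c q.1 * (starRingEnd ℂ) (c' q.2)) * (a x * charE (q.1 - q.2) x) := by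
  rw [eigenSum_eq, eigenSum_eq, map_sum, Finset.sum_mul_sum, ← Finset.sum_product',
    Finset.mul_sum]
  refine Finset.sum_congr rfl fun q _ => ?_
  rw [map_mul, ← charE_mul_conj q.1 q.2 x]
  ring

lemma integral_a_psi {n : ℕ} (F : Finset (Fin n → ℤ)) (c c' : (Fin n → ℤ) → ℂ)
    {a : (Fin n → ℝ) → ℂ} (ha : Integrable a (volume.restrict (torusBox n))) :
    (∫ x in torusBox n, a x * (eigenSum F c x * (starRingEnd ℂ) (eigenSum F c' x)))
      = ∑ q ∈ F ×ˢ F, (c q.1 * (starRingEnd ℂ) (c' q.2)) *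
          ((((2*Real.pi)^n : ℝ) : ℂ) * fourierCoeff' a (q.2 - q.1)) := by
  simp_rw [expand_pair F c c' a]
  rw [integral_finset_sum _ fun q _ => (integrable_a_charE ha (q.1 - q.2)).const_mul _]
  refine Finset.sum_congr rfl fun q _ => ?_
  rw [MeasureTheory.integral_const_mul, integral_a_charE, neg_sub]

lemma box_compact (n : ℕ) : IsCompact (torusBox n) := by
  rw [torusBox]; exact isCompact_univ_pi fun _ => isCompact_Icc

lemma integral_psi_pair {n : ℕ} (F : Finset (Fin n → ℤ)) (c c' : (Fin n → ℤ) → ℂ) :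
    (∫ x in torusBox n, eigenSum F c x * (starRingEnd ℂ) (eigenSum F c' x))
      = (((2*Real.pi)^n : ℝ) : ℂ) * ∑ k ∈ F, c k * (starRingEnd ℂ) (c' k) := by
  have h1 : ∀ x, eigenSum F c x * (starRingEnd ℂ) (eigenSum F c' x)
      = ∑ q ∈ F ×ˢ F, (c q.1 * (starRingEnd ℂ) (c' q.2)) * charE (q.1 - q.2) x := by
    intro x; simpa using expand_pair F c c' (fun _ => 1) x
  simp_rw [h1]
  rw [integral_finset_sum _ fun q _ =>
    (((charE_cont (q.1 - q.2)).continuousOn.integrableOn_compact (box_compact n)).const_mul _)]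
  simp_rw [MeasureTheory.integral_const_mul, charE_int, sub_eq_zero]
  rw [Finset.sum_product]
  rw [Finset.mul_sum]
  refine Finset.sum_congr rfl fun k hk => ?_
  simp_rw [mul_ite, mul_zero]
  rw [Finset.sum_ite_eq F k (fun k' => c k * (starRingEnd ℂ) (c' k') * (((2*Real.pi)^n : ℝ) : ℂ))]
  rw [if_pos hk]
  ring

lemma frob_eq {ι κ : Type} [Fintype ι] [Fintype κ] (B : Matrix ι κ ℂ) :
    ((∑ i, ∑ j, ‖B i j‖ ^ 2 : ℝ) : ℂ) = Matrix.trace (Bᴴ * B) := by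
  simp only [Matrix.trace, Matrix.diag, Matrix.mul_apply, Matrix.conjTranspose_apply]
  push_cast
  rw [Finset.sum_comm]
  refine Finset.sum_congr rfl fun j _ => Finset.sum_congr rfl fun i _ => ?_
  rw [← Complex.ofReal_pow, Complex.sq_norm]
  rw [show star (B i j) = (starRingEnd ℂ) (B i j) from rfl, ← Complex.normSq_eq_conj_mul_self]

lemma hs_bound {ι κ : Type} [Fintype ι] [Fintype κ] [DecidableEq ι] [DecidableEq κ]
    (U : Matrix ι κ ℂ) (hU2 : Uᴴ * U = 1) (M : Matrix κ κ ℂ) :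
    ∑ j, ‖(U * M * Uᴴ) j j‖ ^ 2 ≤ ∑ k, ∑ k', ‖M k k'‖ ^ 2 := by
  have hle : ∑ j, ‖(U*M*Uᴴ) j j‖ ^ 2
      ≤ ∑ j, ∑ j', ‖(U*M*Uᴴ) j j'‖ ^ 2 :=
    Finset.sum_le_sum fun j _ =>
      Finset.single_le_sum (f := fun j' => ‖(U*M*Uᴴ) j j'‖ ^ 2)
        (fun j' _ => by positivity) (Finset.mem_univ j)
  refine hle.trans (le_of_eq ?_)
  have hA : (U*M*Uᴴ)ᴴ * (U*M*Uᴴ) = U * Mᴴ * (Uᴴ * U) * M * Uᴴ := by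
    simp [Matrix.conjTranspose_mul, Matrix.mul_assoc]
  have key : Matrix.trace ((U*M*Uᴴ)ᴴ * (U*M*Uᴴ)) = Matrix.trace (Mᴴ * M) := by
    rw [hA, hU2, Matrix.mul_one, Matrix.trace_mul_comm, ← Matrix.mul_assoc, ← Matrix.mul_assoc,
      hU2, Matrix.one_mul]
  have : ((∑ j, ∑ j', ‖(U*M*Uᴴ) j j'‖ ^ 2 : ℝ) : ℂ)
      = ((∑ k, ∑ k', ‖M k k'‖ ^ 2 : ℝ) : ℂ) := by
    rw [frob_eq, key, ← frob_eq]
  exact_mod_cast this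

lemma fiber_card {n : ℕ} (F : Finset (Fin n → ℤ)) (p : Fin n → ℤ) (hp : p ≠ 0) :
    ((((F ×ˢ F).filter fun q => q.1 ≠ q.2).filter fun q => q.2 - q.1 = p).card)
      = (F.filter fun k => k + p ∈ F).card := by
  apply Finset.card_bij (fun q _ => q.1)
  · intro q hq
    rw [Finset.mem_filter] at hq
    obtain ⟨hq1, hq2⟩ := hq
    rw [Finset.mem_filter, Finset.mem_product] at hq1
    have h2 : q.2 = q.1 + p := by rw [← hq2]; ring
    rw [Finset.mem_filter]
    exact ⟨hq1.1.1, by rw [← h2]; exact hq1.1.2⟩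
  · intro q hq r hr hqr
    rw [Finset.mem_filter] at hq hr
    have h2 : q.2 = q.1 + p := by rw [← hq.2]; ring
    have h2' : r.2 = r.1 + p := by rw [← hr.2]; ring
    exact Prod.ext hqr (by rw [h2, h2', hqr])
  · intro k hk
    rw [Finset.mem_filter] at hk
    refine ⟨(k, k + p), ?_, rfl⟩
    rw [Finset.mem_filter, Finset.mem_filter, Finset.mem_product]
    refine ⟨⟨⟨hk.1, hk.2⟩, ?_⟩, by ring⟩
    simp only [ne_eq, left_eq_add]
    exact fun h => hp h

lemma double_to_filter {n : ℕ} (F : Finset (Fin n → ℤ)) (g : (Fin n → ℤ) → ℝ) :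
    (∑ k ∈ F, ∑ k' ∈ F, if k = k' then 0 else g (k' - k))
      = ∑ q ∈ (F ×ˢ F).filter (fun q => q.1 ≠ q.2), g (q.2 - q.1) := by
  rw [← Finset.sum_product', Finset.sum_filter]
  refine Finset.sum_congr rfl fun q _ => ?_
  by_cases h : q.1 = q.2 <;> simp [h]

lemma filter_to_image {n : ℕ} (F : Finset (Fin n → ℤ)) (g : (Fin n → ℤ) → ℝ) :
    ∑ q ∈ (F ×ˢ F).filter (fun q => q.1 ≠ q.2), g (q.2 - q.1)
      = ∑ p ∈ ((F ×ˢ F).filter (fun q => q.1 ≠ q.2)).image (fun q => q.2 - q.1),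
          g p * ((F.filter fun k => k + p ∈ F).card : ℝ) := by
  rw [← Finset.sum_fiberwise_of_maps_to (g := fun q => q.2 - q.1)
    (fun q hq => Finset.mem_image_of_mem _ hq)]
  refine Finset.sum_congr rfl fun p hp => ?_
  have hp0 : p ≠ 0 := by
    rw [Finset.mem_image] at hp
    obtain ⟨q, hq, rfl⟩ := hp
    rw [Finset.mem_filter] at hq
    exact sub_ne_zero_of_ne (Ne.symm hq.2)
  rw [Finset.sum_congr rfl (fun q hq => by rw [(Finset.mem_filter.1 hq).2] : _),
    Finset.sum_const, nsmul_eq_mul, fiber_card F p hp0, mul_comm]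

theorem statement5 (n : ℕ) (hn : 1 ≤ n) (lam : ℝ) (hlam : 0 < lam)
    (F : Finset (Fin n → ℤ))
    (hF : ∀ k : Fin n → ℤ, k ∈ F ↔ euclNorm (fun i => (k i : ℝ)) = lam)
    (ι : Type) [Fintype ι] [DecidableEq ι] (c : ι → (Fin n → ℤ) → ℂ) (ψ : ι → (Fin n → ℝ) → ℂ)
    (hψ : ∀ j x, ψ j x = eigenSum F (c j) x)
    -- orthonormality in `L²(𝕋ⁿ)`
    (horth : ∀ j j' : ι,
      (∫ x in torusBox n, ψ j x * (starRingEnd ℂ) (ψ j' x)) = if j = j' then 1 else 0)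
    -- completeness: as many basis vectors as the dimension of `E_λ`
    (hcard : Fintype.card ι = F.card)
    (a : (Fin n → ℝ) → ℂ) (ha : MemLp a 2 (volume.restrict (torusBox n))) :
    ∑ j : ι,
        ‖(∫ x in torusBox n, a x * ((‖ψ j x‖ ^ 2 : ℝ) : ℂ))
            - fourierCoeff' a 0‖ ^ 2
      ≤ (2*Real.pi)^n *
        ∑' p : {p : Fin n → ℤ // p ≠ 0},
          ‖fourierCoeff' a p.1‖ ^ 2 *
            ({k : Fin n → ℤ | euclNorm (fun i => (k i : ℝ)) = lam ∧
              euclNorm (fun i => ((k i + p.1 i : ℤ) : ℝ)) = lam}.ncard : ℝ) := by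
  classical
  have ha_int : Integrable a (volume.restrict (torusBox n)) := ha.integrable one_le_two
  -- orthonormality of coefficient vectors
  have hC : ∀ j j' : ι, (((2*Real.pi)^n : ℝ) : ℂ) *
      ∑ k ∈ F, c j k * (starRingEnd ℂ) (c j' k) = if j = j' then 1 else 0 := by
    intro j j'
    have h := horth j j'
    simp_rw [hψ] at h
    rw [integral_psi_pair] at h
    exact h
  -- the unitary matrix and the Fourier multiplier matrix
  set s0 : ℝ := Real.sqrt ((2*Real.pi)^n) with hs0def
  have hs0 : (s0:ℂ) * (s0:ℂ) = (((2*Real.pi)^n : ℝ) : ℂ) := by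
    rw [← Complex.ofReal_mul, Real.mul_self_sqrt (twopin_pos n).le]
  set U : Matrix ι {k // k ∈ F} ℂ := Matrix.of (fun j k => (s0:ℂ) * c j k.1) with hUdef
  set M : Matrix {k // k ∈ F} {k // k ∈ F} ℂ :=
    Matrix.of (fun k k' => if k = k' then 0 else fourierCoeff' a (k'.1 - k.1)) with hMdef
  have e : ι ≃ {k // k ∈ F} := Fintype.equivOfCardEq (by rw [hcard, Fintype.card_coe])
  have hU1 : U * Uᴴ = 1 := by
    ext j j'
    rw [Matrix.mul_apply]
    have : ∀ k : {k // k ∈ F}, U j k * Uᴴ k j'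
        = (((2*Real.pi)^n : ℝ) : ℂ) * (c j k.1 * (starRingEnd ℂ) (c j' k.1)) := by
      intro k
      rw [Matrix.conjTranspose_apply, hUdef]
      simp only [Matrix.of_apply]
      rw [show (star ((s0:ℂ) * c j' k.1) : ℂ) = (starRingEnd ℂ) ((s0:ℂ) * c j' k.1) from rfl,
        map_mul, Complex.conj_ofReal, ← hs0]
      ring
    simp_rw [this]
    rw [← Finset.mul_sum, Finset.sum_coe_sort F (fun k => c j k * (starRingEnd ℂ) (c j' k)),
      hC j j']
    rw [Matrix.one_apply]
  have hU2 : Uᴴ * U = 1 := (Matrix.mul_eq_one_comm_of_equiv e).mp hU1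
  -- the diagonal identity
  have hdiag : ∀ j : ι,
      (∫ x in torusBox n, a x * ((‖ψ j x‖ ^ 2 : ℝ) : ℂ)) - fourierCoeff' a 0
        = (U * M * Uᴴ) j j := by
    intro j
    have h1 : ∀ x, a x * ((‖ψ j x‖ ^ 2 : ℝ) : ℂ)
        = a x * (eigenSum F (c j) x * (starRingEnd ℂ) (eigenSum F (c j) x)) := by
      intro x
      rw [hψ]
      congr 1
      rw [Complex.sq_norm, Complex.mul_conj]
    simp_rw [h1]
    rw [integral_a_psi F (c j) (c j) ha_int]
    -- abbreviations
    set t : (Fin n → ℤ) × (Fin n → ℤ) → ℂ := fun q =>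
      (c j q.1 * (starRingEnd ℂ) (c j q.2)) *
        ((((2*Real.pi)^n : ℝ) : ℂ) * fourierCoeff' a (q.2 - q.1)) with htdef
    set g2 : (Fin n → ℤ) → (Fin n → ℤ) → ℂ := fun k k' =>
      if k = k' then 0 else
        (c j k * (starRingEnd ℂ) (c j k')) *
          ((((2*Real.pi)^n : ℝ) : ℂ) * fourierCoeff' a (k' - k)) with hg2def
    have hterm : ∀ k k' : {k // k ∈ F}, U j k * M k k' * star (U j k') = g2 k.1 k'.1 := by
      intro k k'
      rw [hUdef, hMdef, hg2def]
      simp only [Matrix.of_apply]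
      rw [show (star ((s0:ℂ) * c j k'.1) : ℂ) = (starRingEnd ℂ) ((s0:ℂ) * c j k'.1) from rfl,
        map_mul, Complex.conj_ofReal]
      by_cases h : k = k'
      · rw [if_pos h, if_pos (by rw [h])]; ring
      · rw [if_neg h, if_neg (fun hh => h (Subtype.ext hh)), ← hs0]; ring
    have hRHS : (U * M * Uᴴ) j j = ∑ k ∈ F, ∑ k' ∈ F, g2 k k' := by
      rw [Matrix.mul_apply]
      simp_rw [Matrix.mul_apply, Matrix.conjTranspose_apply, Finset.sum_mul]
      rw [Finset.sum_comm]
      simp_rw [hterm]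
      rw [Finset.sum_coe_sort F (fun k => ∑ k' : {k // k ∈ F}, g2 k k'.1)]
      exact Finset.sum_congr rfl fun k _ => Finset.sum_coe_sort F (g2 k)
    have hsplitpt : ∀ q ∈ F ×ˢ F, t q = (if q.1 = q.2 then t q else 0) + g2 q.1 q.2 := by
      intro q _
      by_cases h : q.1 = q.2
      · simp only [if_pos h, hg2def, add_zero]
      · simp only [if_neg h, hg2def, zero_add, htdef]
    have hdiagsum : (∑ q ∈ F ×ˢ F, if q.1 = q.2 then t q else 0) = fourierCoeff' a 0 := by
      rw [Finset.sum_product]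
      simp_rw [Finset.sum_ite_eq]
      rw [Finset.sum_congr rfl fun k hk => if_pos hk]
      have : ∀ k, t (k, k) = (c j k * (starRingEnd ℂ) (c j k)) *
          ((((2*Real.pi)^n : ℝ) : ℂ) * fourierCoeff' a 0) := by
        intro k; rw [htdef]; simp
      simp_rw [this]
      rw [← Finset.sum_mul,
        show (∑ k ∈ F, c j k * (starRingEnd ℂ) (c j k)) *
            ((((2*Real.pi)^n : ℝ) : ℂ) * fourierCoeff' a 0)
          = ((((2*Real.pi)^n : ℝ) : ℂ) * ∑ k ∈ F, c j k * (starRingEnd ℂ) (c j k)) *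
            fourierCoeff' a 0 from by ring,
        hC j j]
      simp
    rw [Finset.sum_congr rfl hsplitpt, Finset.sum_add_distrib, hdiagsum, hRHS,
      ← Finset.sum_product']
    ring
  -- the main estimate
  have hmain : ∑ j : ι,
      ‖(∫ x in torusBox n, a x * ((‖ψ j x‖ ^ 2 : ℝ) : ℂ))
          - fourierCoeff' a 0‖ ^ 2
      ≤ ∑ k ∈ F, ∑ k' ∈ F,
          if k = k' then 0 else ‖fourierCoeff' a (k' - k)‖ ^ 2 := by
    have h1 : ∑ j : ι,
        ‖(∫ x in torusBox n, a x * ((‖ψ j x‖ ^ 2 : ℝ) : ℂ))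
            - fourierCoeff' a 0‖ ^ 2
        = ∑ j : ι, ‖(U * M * Uᴴ) j j‖ ^ 2 :=
      Finset.sum_congr rfl fun j _ => by rw [hdiag j]
    rw [h1]
    refine (hs_bound U hU2 M).trans (le_of_eq ?_)
    have h2 : ∀ k k' : {k // k ∈ F}, ‖M k k'‖ ^ 2
        = (fun (k k' : Fin n → ℤ) =>
            if k = k' then 0 else ‖fourierCoeff' a (k' - k)‖ ^ 2) k.1 k'.1 := by
      intro k k'
      rw [hMdef]
      simp only [Matrix.of_apply]
      by_cases h : k = k'
      · rw [if_pos h, if_pos (by rw [h])]; simp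
      · rw [if_neg h, if_neg (fun hh => h (Subtype.ext hh))]
    simp_rw [h2]
    rw [Finset.sum_coe_sort F (fun k => ∑ k' : {k // k ∈ F},
      if k = k'.1 then 0 else ‖fourierCoeff' a (k'.1 - k)‖ ^ 2)]
    exact Finset.sum_congr rfl fun k _ => Finset.sum_coe_sort F
      (fun k' => if k = k' then 0 else ‖fourierCoeff' a (k' - k)‖ ^ 2)
  -- reindex the double sum over differences
  set D : Finset (Fin n → ℤ) :=
    ((F ×ˢ F).filter (fun q => q.1 ≠ q.2)).image (fun q => q.2 - q.1) with hDdef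
  have hD0 : ∀ p ∈ D, p ≠ 0 := by
    intro p hp
    rw [hDdef, Finset.mem_image] at hp
    obtain ⟨q, hq, rfl⟩ := hp
    rw [Finset.mem_filter] at hq
    exact sub_ne_zero_of_ne (Ne.symm hq.2)
  have hreix : (∑ k ∈ F, ∑ k' ∈ F,
        if k = k' then 0 else ‖fourierCoeff' a (k' - k)‖ ^ 2)
      = ∑ p ∈ D, ‖fourierCoeff' a p‖ ^ 2 *
          ((F.filter fun k => k + p ∈ F).card : ℝ) := by
    rw [double_to_filter F (fun p => ‖fourierCoeff' a p‖ ^ 2),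
      filter_to_image F (fun p => ‖fourierCoeff' a p‖ ^ 2)]
  -- identify the cardinalities
  have hset : ∀ p : Fin n → ℤ,
      ({k : Fin n → ℤ | euclNorm (fun i => (k i : ℝ)) = lam ∧
          euclNorm (fun i => ((k i + p i : ℤ) : ℝ)) = lam} : Set (Fin n → ℤ))
        = ↑(F.filter fun k => k + p ∈ F) := by
    intro p
    ext k
    simp only [Set.mem_setOf_eq, Finset.coe_filter, Set.mem_setOf_eq]
    rw [hF k, hF (k + p)]
    rfl
  have hncard : ∀ p : Fin n → ℤ,
      (({k : Fin n → ℤ | euclNorm (fun i => (k i : ℝ)) = lam ∧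
          euclNorm (fun i => ((k i + p i : ℤ) : ℝ)) = lam}.ncard : ℝ))
        = ((F.filter fun k => k + p ∈ F).card : ℝ) := by
    intro p
    rw [hset p, Set.ncard_coe_finset]
  -- the tsum side
  set T : {p : Fin n → ℤ // p ≠ 0} → ℝ := fun p =>
    ‖fourierCoeff' a p.1‖ ^ 2 *
      ({k : Fin n → ℤ | euclNorm (fun i => (k i : ℝ)) = lam ∧
        euclNorm (fun i => ((k i + p.1 i : ℤ) : ℝ)) = lam}.ncard : ℝ) with hTdef
  have hTnonneg : ∀ p, 0 ≤ T p := by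
    intro p
    rw [hTdef]
    positivity
  set Dsub : Finset {p : Fin n → ℤ // p ≠ 0} := D.subtype (fun p => p ≠ 0) with hDsubdef
  have hTzero : ∀ p : {p : Fin n → ℤ // p ≠ 0}, p ∉ Dsub → T p = 0 := by
    intro p hp
    rw [hDsubdef, Finset.mem_subtype] at hp
    have hempty : (F.filter fun k => k + p.1 ∈ F) = ∅ := by
      rw [Finset.filter_eq_empty_iff]
      intro k hk hk2
      apply hp
      rw [hDdef, Finset.mem_image]
      refine ⟨(k, k + p.1), ?_, by ring⟩
      rw [Finset.mem_filter, Finset.mem_product]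
      refine ⟨⟨hk, hk2⟩, ?_⟩
      simp only [ne_eq, left_eq_add]
      exact fun h => p.2 h
    rw [hTdef]
    simp only
    rw [hncard p.1, hempty]
    simp
  have hTsummable : Summable T := summable_of_ne_finset_zero hTzero
  have hDsum : (∑ p ∈ D, ‖fourierCoeff' a p‖ ^ 2 *
        ((F.filter fun k => k + p ∈ F).card : ℝ)) = ∑ p ∈ Dsub, T p := by
    conv_rhs => rw [hDsubdef]
    simp only [hTdef]
    have h1 := Finset.sum_subtype_eq_sum_filter
      (f := fun q => ‖fourierCoeff' a q‖ ^ 2 *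
        (({k : Fin n → ℤ | euclNorm (fun i => (k i : ℝ)) = lam ∧
          euclNorm (fun i => ((k i + q i : ℤ) : ℝ)) = lam}).ncard : ℝ))
      (s := D) (p := fun p => p ≠ 0)
    refine Eq.trans ?_ h1.symm
    rw [Finset.filter_true_of_mem hD0]
    exact Finset.sum_congr rfl fun p hp => by rw [hncard p]
  have htsum_le : ∑ p ∈ Dsub, T p ≤ ∑' p, T p :=
    Summable.sum_le_tsum Dsub (fun p _ => hTnonneg p) hTsummable
  have hfactor : (1:ℝ) ≤ (2*Real.pi)^n :=
    one_le_pow₀ (by nlinarith [Real.pi_gt_three])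
  calc ∑ j : ι,
        ‖(∫ x in torusBox n, a x * ((‖ψ j x‖ ^ 2 : ℝ) : ℂ))
            - fourierCoeff' a 0‖ ^ 2
      ≤ ∑ p ∈ Dsub, T p := by rw [← hDsum, ← hreix]; exact hmain
    _ ≤ ∑' p, T p := htsum_le
    _ ≤ (2*Real.pi)^n * ∑' p, T p :=
        le_mul_of_one_le_left (tsum_nonneg hTnonneg) hfactor
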